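/- Parametrization invariance: Let T : H → G be bounded linear between Hilbert spaces, r ∈ G, a ∈ H. Suppose h, h′ ∈ H both minimize ‖T u − r‖² over u ∈ H, and g, g′ ∈ G both minimize ‖T* v − a‖² over v ∈ G. Then ⟨T h, g⟩ = ⟨T h′, g′⟩ (equivalently ⟨h, T* g⟩ = ⟨h′, T* g′⟩). -/
import Mathlib


open ContinuousLinearMap RealInnerProductSpace

lemma eq_of_two_min {E : Type*} [NormedAddCommGroup E] [InnerProductSpace ℝ E]
    (x y r : E) (hx : ‖x - r‖ ≤ ‖y - r‖) (hy : ‖y - r‖ ≤ ‖x - r‖)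
    (hm : ‖x - r‖ ≤ ‖(2:ℝ)⁻¹ • (x + y) - r‖) : x = y := by
  have hxy : ‖x - r‖ = ‖y - r‖ := le_antisymm hx hy
  have hpar := parallelogram_law_with_norm ℝ (x - r) (y - r)
  have h2 : (x - r) + (y - r) = (2:ℝ) • ((2:ℝ)⁻¹ • (x + y) - r) := by
    rw [smul_sub, smul_inv_smul₀ (by norm_num : (2:ℝ) ≠ 0)]
    module
  have h3 : ‖(x - r) + (y - r)‖ = 2 * ‖(2:ℝ)⁻¹ • (x + y) - r‖ := by
    rw [h2, norm_smul]; simp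
  have h0 : ‖(x - r) - (y - r)‖ = 0 := by
    nlinarith [norm_nonneg ((x - r) - (y - r)), norm_nonneg (x - r),
      norm_nonneg ((2:ℝ)⁻¹ • (x + y) - r)]
  have hxy0 : x - y = 0 := by
    have := norm_eq_zero.mp h0
    rwa [sub_sub_sub_cancel_right] at this
  exact sub_eq_zero.mp hxy0

/-- Parametrization invariance: the pairing `⟪T h, g⟫` takes the same value for all
least-squares solutions `h` of `T h ≈ r` and `g` of `T* g ≈ a`. -/
theorem parametrization_invariance
    {H G : Type*} [NormedAddCommGroup H] [InnerProductSpace ℝ H] [CompleteSpace H]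
    [NormedAddCommGroup G] [InnerProductSpace ℝ G] [CompleteSpace G]
    (T : H →L[ℝ] G) (r : G) (a : H) (h h' : H) (g g' : G)
    (hh : ∀ u : H, ‖T h - r‖ ≤ ‖T u - r‖)
    (hh' : ∀ u : H, ‖T h' - r‖ ≤ ‖T u - r‖)
    (hg : ∀ v : G, ‖adjoint T g - a‖ ≤ ‖adjoint T v - a‖)
    (hg' : ∀ v : G, ‖adjoint T g' - a‖ ≤ ‖adjoint T v - a‖) :
    ⟪T h, g⟫ = ⟪T h', g'⟫ ∧ ⟪h, adjoint T g⟫ = ⟪h', adjoint T g'⟫ := by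
  have hT : T h = T h' := by
    apply eq_of_two_min (T h) (T h') r (hh h') (hh' h)
    have := hh ((2:ℝ)⁻¹ • (h + h'))
    simpa [map_smul, map_add] using this
  have hTs : adjoint T g = adjoint T g' := by
    apply eq_of_two_min _ _ a (hg g') (hg' g)
    have := hg ((2:ℝ)⁻¹ • (g + g'))
    simpa [map_smul, map_add] using this
  have key : ⟪T h, g⟫ = ⟪T h', g'⟫ := by
    rw [← adjoint_inner_right, hTs, adjoint_inner_right, hT]
  refine ⟨key, ?_⟩
  rw [adjoint_inner_right, adjoint_inner_right]
  exact key
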